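/- Let $A$ be a normal abelian subgroup of a group $G$ and $g \in G$ such that $g$ is a randomly power $k$-Engel element of $K = A\langle g \rangle$. Then $g$ is a left $k$-Engel element of $K$, i.e., $[x,{}_k\, g] = 1$ for all $x \in K$. -/

import Mathlib

open scoped commutatorElement

/-- Iterated commutator `[x, y, y, ..., y]` with `y` repeated `k` times (`engel x y 0 = x`). -/
def engel {G : Type*} [Group G] (x y : G) : ℕ → G
  | 0 => x
  | k + 1 => ⁅engel x y k, y⁆

/-- Left-normed iterated commutator `[x, l₁, l₂, ..., lₙ]`. -/
def lcomm {G : Type*} [Group G] (x : G) (l : List G) : G :=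
  l.foldl (fun u v => ⁅u, v⁆) x

/-- `x` is a left Engel element of `G`. -/
def IsLeftEngel (G : Type*) [Group G] (x : G) : Prop :=
  ∀ a : G, ∃ k : ℕ, 0 < k ∧ engel a x k = 1

namespace StmtAux
open Subgroup

variable {G : Type*} [Group G] {A : Subgroup G}

lemma lcomm_cons {x h : G} {t : List G} : lcomm x (h :: t) = lcomm ⁅x, h⁆ t := rfl

-- pure group identities
lemma L3 {c u h : G} (hc : Commute u h) : ⁅c * u, h⁆ = ⁅c, h⁆ := by
  have : u * h * u⁻¹ = h := by rw [hc.eq]; group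
  calc ⁅c * u, h⁆ = c * (u * h * u⁻¹) * c⁻¹ * h⁻¹ := by group
    _ = ⁅c, h⁆ := by rw [this]; group

lemma L5 {u c v : G} (huv : Commute u v) : ⁅u, c * v⁆ = ⁅u, c⁆ := by
  have : v * u⁻¹ * v⁻¹ = u⁻¹ := by
    have := huv.inv_left.eq; rw [← this]; group
  calc ⁅u, c * v⁆ = u * c * (v * u⁻¹ * v⁻¹) * c⁻¹ := by group
    _ = ⁅u, c⁆ := by rw [this]; group

lemma comm_mul_right_gen (y u v : G) : ⁅y, u * v⁆ = ⁅y, u⁆ * (u * ⁅y, v⁆ * u⁻¹) := by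
  group

lemma comm_inv_right (y v : G) : ⁅y, v⁻¹⁆ = v⁻¹ * ⁅y, v⁆⁻¹ * v := by group

-- membership
lemma commA (hA : A.Normal) {b : G} (hb : b ∈ A) (h : G) : ⁅b, h⁆ ∈ A := by
  have : ⁅b, h⁆ = b * (h * b⁻¹ * h⁻¹) := by group
  rw [this]
  exact mul_mem hb (hA.conj_mem _ (inv_mem hb) h)

lemma engel_memA (hA : A.Normal) {b : G} (hb : b ∈ A) (g : G) (s : ℕ) :
    engel b g s ∈ A := by
  induction s with
  | zero => exact hb
  | succ n ih => exact commA hA ih g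

variable (hA : A.Normal) (hab : ∀ u ∈ A, ∀ v ∈ A, u * v = v * u)
include hA hab

lemma comm_mul_left {b₁ b₂ : G} (h₁ : b₁ ∈ A) (h₂ : b₂ ∈ A) (u : G) :
    ⁅b₁ * b₂, u⁆ = ⁅b₁, u⁆ * ⁅b₂, u⁆ := by
  have e1 : ⁅b₂, u⁆ ∈ A := commA hA h₂ u
  have e2 : u * b₁⁻¹ * u⁻¹ ∈ A := hA.conj_mem _ (inv_mem h₁) u
  have key := hab _ e1 _ e2
  set w := u * b₁⁻¹ * u⁻¹ with hw
  calc ⁅b₁ * b₂, u⁆ = b₁ * (⁅b₂, u⁆ * w) := by rw [hw]; group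
    _ = b₁ * (w * ⁅b₂, u⁆) := by rw [key]
    _ = ⁅b₁, u⁆ * ⁅b₂, u⁆ := by rw [hw]; group

lemma engel_mul {b₁ b₂ : G} (h₁ : b₁ ∈ A) (h₂ : b₂ ∈ A) (g : G) (s : ℕ) :
    engel (b₁ * b₂) g s = engel b₁ g s * engel b₂ g s := by
  induction s with
  | zero => rfl
  | succ n ih =>
    show ⁅engel (b₁ * b₂) g n, g⁆ = ⁅engel b₁ g n, g⁆ * ⁅engel b₂ g n, g⁆
    rw [ih, comm_mul_left hA hab (engel_memA hA h₁ g n) (engel_memA hA h₂ g n)]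

omit hA hab in
lemma engel_one (g : G) (s : ℕ) : engel (1 : G) g s = 1 := by
  induction s with
  | zero => rfl
  | succ n ih => show ⁅engel (1:G) g n, g⁆ = 1; rw [ih]; group

lemma engel_inv {b : G} (hb : b ∈ A) (g : G) (s : ℕ) :
    engel b⁻¹ g s = (engel b g s)⁻¹ := by
  have := engel_mul hA hab (inv_mem hb) hb g s
  rw [inv_mul_cancel, engel_one] at this
  exact eq_inv_of_mul_eq_one_left this.symm

-- L1: Engel operators commute on A
lemma L1 {b h₁ h₂ : G} (hb : b ∈ A) (hc : Commute h₁ h₂) :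
    ⁅⁅b, h₁⁆, h₂⁆ = ⁅⁅b, h₂⁆, h₁⁆ := by
  set q₁ := h₁ * b⁻¹ * h₁⁻¹ with hq₁
  set q₂ := h₂ * b⁻¹ * h₂⁻¹ with hq₂
  set r := h₂ * (h₁ * b * h₁⁻¹) * h₂⁻¹ with hr
  have mq₁ : q₁ ∈ A := hA.conj_mem _ (inv_mem hb) h₁
  have mq₂ : q₂ ∈ A := hA.conj_mem _ (inv_mem hb) h₂
  have mr : r ∈ A := hA.conj_mem _ (hA.conj_mem _ hb h₁) h₂
  have hr' : h₁ * (h₂ * b * h₂⁻¹) * h₁⁻¹ = r := by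
    rw [hr]
    have e : h₁ * h₂ = h₂ * h₁ := hc.eq
    calc h₁ * (h₂ * b * h₂⁻¹) * h₁⁻¹ = (h₁ * h₂) * b * (h₁ * h₂)⁻¹ := by group
      _ = (h₂ * h₁) * b * (h₂ * h₁)⁻¹ := by rw [e]
      _ = h₂ * (h₁ * b * h₁⁻¹) * h₂⁻¹ := by group
  have lhs : ⁅⁅b, h₁⁆, h₂⁆ = b * (q₁ * (r * q₂)) := by
    rw [hq₁, hq₂, hr]; group
  have rhs : ⁅⁅b, h₂⁆, h₁⁆ = b * (q₂ * (r * q₁)) := by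
    rw [← hr', hq₁, hq₂]; group
  rw [lhs, rhs]
  congr 1
  calc q₁ * (r * q₂) = (q₁ * r) * q₂ := (mul_assoc _ _ _).symm
    _ = (r * q₁) * q₂ := by rw [hab _ mq₁ _ mr]
    _ = r * (q₁ * q₂) := mul_assoc _ _ _
    _ = r * (q₂ * q₁) := by rw [hab _ mq₁ _ mq₂]
    _ = (r * q₂) * q₁ := (mul_assoc _ _ _).symm
    _ = (q₂ * r) * q₁ := by rw [hab _ mq₂ _ mr]
    _ = q₂ * (r * q₁) := mul_assoc _ _ _

lemma engel_comm_swap {b h g : G} (hb : b ∈ A) (hc : Commute h g) (s : ℕ) :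
    engel ⁅b, h⁆ g s = ⁅engel b g s, h⁆ := by
  induction s with
  | zero => rfl
  | succ n ih =>
    show ⁅engel ⁅b, h⁆ g n, g⁆ = ⁅⁅engel b g n, g⁆, h⁆
    rw [ih, L1 hA hab (engel_memA hA hb g n) (hc.symm)]


-- commute transfer via equal zpowers
omit hA hab in
lemma L2 {h g e : G} (hzp : zpowers h = zpowers g) (he : ⁅e, h⁆ = 1) : ⁅e, g⁆ = 1 := by
  rw [commutatorElement_eq_one_iff_commute] at he ⊢
  have : g ∈ zpowers h := hzp ▸ mem_zpowers g
  obtain ⟨m, rfl⟩ := this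
  exact he.zpow_right m

omit hA hab in
lemma commute_g_of_zpowers {h g : G} (hzp : zpowers h = zpowers g) : Commute h g := by
  have : h ∈ zpowers g := hzp ▸ mem_zpowers h
  obtain ⟨m, rfl⟩ := this
  show Commute (g ^ m) g
  exact (Commute.refl g).zpow_left m

-- main reduction lemma
lemma reduction {g b : G} (hb : b ∈ A) (hs : List G)
    (hgen : ∀ h ∈ hs, zpowers h = zpowers g) (hl : lcomm b hs = 1) :
    engel b g hs.length = 1 := by
  induction hs generalizing b with
  | nil => exact hl
  | cons h t ih =>
    rw [lcomm_cons] at hl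
    have h1 : zpowers h = zpowers g := hgen h (List.mem_cons_self (a := h) (l := t))
    have h2 := ih (commA hA hb h) (fun h' hh' => hgen h' (List.mem_cons_of_mem h hh')) hl
    rw [engel_comm_swap hA hab hb (commute_g_of_zpowers h1)] at h2
    show ⁅engel b g t.length, g⁆ = 1
    exact L2 h1 h2

lemma L4 {b c : G} (hb : b ∈ A) (hcA : c ∈ A) (u : G) : ⁅b, c * u⁆ = ⁅b, u⁆ := by
  have e1 : b * c = c * b := hab _ hb _ hcA
  have e2 : ⁅b, u⁆ ∈ A := commA hA hb u
  have e3 : ⁅b, u⁆ * c⁻¹ = c⁻¹ * ⁅b, u⁆ := hab _ e2 _ (inv_mem hcA)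
  calc ⁅b, c * u⁆ = (b * c) * u * b⁻¹ * u⁻¹ * c⁻¹ := by group
    _ = c * (b * u * b⁻¹ * u⁻¹) * c⁻¹ := by rw [e1]; group
    _ = c * (⁅b, u⁆ * c⁻¹) := by group
    _ = ⁅b, u⁆ := by rw [e3]; group

-- commutators of K = A ⊔ zpowers g lie in A
omit hab in
lemma commK {g u v : G} (hu : u ∈ A ⊔ zpowers g) (hv : v ∈ A ⊔ zpowers g) :
    ⁅u, v⁆ ∈ A := by
  let π := QuotientGroup.mk' A
  have key : ∀ w ∈ A ⊔ zpowers g, π w ∈ zpowers (π g) := by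
    intro w hw
    have : π w ∈ Subgroup.map π (A ⊔ zpowers g) := Subgroup.mem_map_of_mem π hw
    rw [Subgroup.map_sup] at this
    have h1 : Subgroup.map π A = ⊥ := by
      rw [eq_bot_iff]
      rintro y ⟨a, ha, rfl⟩
      simpa [π, QuotientGroup.eq_one_iff] using ha
    rw [h1, MonoidHom.map_zpowers, bot_sup_eq] at this
    exact this
  obtain ⟨m, hm⟩ := key u hu
  obtain ⟨n, hn⟩ := key v hv
  have : π ⁅u, v⁆ = 1 := by
    rw [map_commutatorElement, ← hm, ← hn, commutatorElement_eq_one_iff_commute]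
    exact Commute.zpow_zpow (Commute.refl _) m n
  exact (QuotientGroup.eq_one_iff _).mp this

omit hA hab in
lemma comm_conj {h g b : G} (hc : Commute h g) :
    ⁅h * b * h⁻¹, g⁆ = h * ⁅b, g⁆ * h⁻¹ := by
  have e : h⁻¹ * g * h = g := by
    rw [mul_assoc, ← hc.eq]; group
  calc ⁅h * b * h⁻¹, g⁆ = h * (b * (h⁻¹ * g * h) * b⁻¹ * (h⁻¹ * g⁻¹ * h)) * h⁻¹ := by group
    _ = h * ⁅b, g⁆ * h⁻¹ := by
        have e2 : h⁻¹ * g⁻¹ * h = g⁻¹ := by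
          rw [mul_assoc, ← hc.inv_right.eq]; group
        rw [e, e2]; group

omit hA hab in
lemma engel_conj {h g b : G} (hc : Commute h g) (s : ℕ) :
    engel (h * b * h⁻¹) g s = h * engel b g s * h⁻¹ := by
  induction s with
  | zero => rfl
  | succ n ih =>
    show ⁅engel (h * b * h⁻¹) g n, g⁆ = h * ⁅engel b g n, g⁆ * h⁻¹
    rw [ih, comm_conj hc]


lemma engel_pow_right {g y h : G} (hyK : y ∈ A ⊔ zpowers g) (hhK : h ∈ A ⊔ zpowers g)
    (hc : Commute h g) (s : ℕ) (h1 : engel ⁅y, h⁆ g s = 1) (n : ℕ) :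
    engel ⁅y, h ^ n⁆ g s = 1 := by
  induction n with
  | zero => rw [pow_zero, commutatorElement_one_right]; exact engel_one g s
  | succ m ih =>
    rw [pow_succ', comm_mul_right_gen]
    have m1 : ⁅y, h⁆ ∈ A := commK hA hyK hhK
    have m2 : h * ⁅y, h ^ m⁆ * h⁻¹ ∈ A :=
      hA.conj_mem _ (commK hA hyK (pow_mem hhK m)) h
    rw [engel_mul hA hab m1 m2, h1, engel_conj (hc) s, ih]
    group

lemma engel_zpow_right {g y h : G} (hyK : y ∈ A ⊔ zpowers g) (hhK : h ∈ A ⊔ zpowers g)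
    (hc : Commute h g) (s : ℕ) (h1 : engel ⁅y, h⁆ g s = 1) (t : ℤ) :
    engel ⁅y, h ^ t⁆ g s = 1 := by
  cases t with
  | ofNat n =>
    rw [Int.ofNat_eq_coe, zpow_natCast]
    exact engel_pow_right hA hab hyK hhK hc s h1 n
  | negSucc n =>
    rw [zpow_negSucc, comm_inv_right]
    have hb : ⁅y, h ^ (n + 1)⁆ ∈ A := commK hA hyK (pow_mem hhK (n + 1))
    have hcp : Commute ((h ^ (n + 1))⁻¹) g := (hc.pow_left (n + 1)).inv_left
    have := engel_conj (b := ⁅y, h ^ (n + 1)⁆⁻¹) hcp s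
    rw [inv_inv] at this
    rw [this, engel_inv hA hab hb,
      engel_pow_right hA hab hyK hhK hc s h1 (n + 1)]
    group

omit hA hab in
lemma engel_conj_gen (w c d : G) (s : ℕ) :
    engel (w * c * w⁻¹) (w * d * w⁻¹) s = w * engel c d s * w⁻¹ := by
  induction s with
  | zero => rfl
  | succ n ih =>
    show ⁅engel (w * c * w⁻¹) (w * d * w⁻¹) n, w * d * w⁻¹⁆ = w * ⁅engel c d n, d⁆ * w⁻¹
    rw [ih]; group

lemma engel_absorb {g c e : G} (hcA : c ∈ A) (heA : e ∈ A) (s : ℕ) :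
    engel c (e * g) s = engel c g s := by
  induction s with
  | zero => rfl
  | succ n ih =>
    show ⁅engel c (e * g) n, e * g⁆ = ⁅engel c g n, g⁆
    rw [ih, L4 hA hab (engel_memA hA hcA g n) heA]

omit hA hab in
lemma engel_shift (x g : G) (s : ℕ) : engel x g (s + 1) = engel ⁅x, g⁆ g s := by
  induction s with
  | zero => rfl
  | succ n ih =>
    show ⁅engel x g (n + 1), g⁆ = ⁅engel ⁅x, g⁆ g n, g⁆
    rw [ih]

lemma tailAll {g x h : G} (hzp : zpowers h = zpowers g) (hxK : x ∈ A ⊔ zpowers g)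
    (s : ℕ) (h1 : engel ⁅x⁻¹, h⁆ g s = 1) : engel x g (s + 1) = 1 := by
  have hgK : g ∈ A ⊔ zpowers g := Subgroup.mem_sup_right (mem_zpowers g)
  have hhK : h ∈ A ⊔ zpowers g := Subgroup.mem_sup_right (hzp ▸ mem_zpowers h)
  have hyK : x⁻¹ ∈ A ⊔ zpowers g := inv_mem hxK
  have hcg : Commute h g := commute_g_of_zpowers hzp
  -- step (i): replace h by g
  obtain ⟨t, ht⟩ := (Subgroup.mem_zpowers_iff).mp (hzp ▸ mem_zpowers g : g ∈ zpowers h)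
  have h2 : engel ⁅x⁻¹, g⁆ g s = 1 := by
    have := engel_zpow_right hA hab hyK hhK hcg s h1 t
    rwa [ht] at this
  -- step (ii): replace x⁻¹ by x
  set b := ⁅x, g⁆ with hbdef
  have hbA : b ∈ A := commK hA hxK hgK
  have key : ⁅x⁻¹, g⁆ = x⁻¹ * b⁻¹ * (x⁻¹)⁻¹ := by rw [hbdef]; group
  rw [key] at h2
  have e1 : g = x⁻¹ * (x * g * x⁻¹) * (x⁻¹)⁻¹ := by group
  have e2 : engel (x⁻¹ * b⁻¹ * (x⁻¹)⁻¹) g s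
      = x⁻¹ * engel b⁻¹ (x * g * x⁻¹) s * (x⁻¹)⁻¹ := by
    conv_lhs => rw [e1]
    exact engel_conj_gen x⁻¹ b⁻¹ (x * g * x⁻¹) s
  rw [e2] at h2
  have h3 : engel b⁻¹ (x * g * x⁻¹) s = 1 := by
    have e4 : engel b⁻¹ (x * g * x⁻¹) s
        = x * (x⁻¹ * engel b⁻¹ (x * g * x⁻¹) s * (x⁻¹)⁻¹) * x⁻¹ := by group
    rw [e4, h2]; group
  have e3 : x * g * x⁻¹ = b * g := by rw [hbdef]; group
  rw [e3, engel_absorb hA hab (inv_mem hbA) hbA s, engel_inv hA hab hbA _ s,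
    inv_eq_one] at h3
  rw [engel_shift, ← hbdef, h3]

lemma map_absorb {g x : G} (hxK : x ∈ A ⊔ zpowers g) (t : List G)
    (htK : ∀ gi ∈ t, gi ∈ A ⊔ zpowers g) {b : G} (hb : b ∈ A) :
    lcomm b (t.map (fun gi => x⁻¹ * gi * x)) = lcomm b t := by
  induction t generalizing b with
  | nil => rfl
  | cons gi t' ih =>
    rw [List.map_cons, lcomm_cons, lcomm_cons]
    have hgiK : gi ∈ A ⊔ zpowers g := htK gi (List.mem_cons_self (a := gi) (l := t'))
    have hf : x⁻¹ * gi * x = ⁅x⁻¹, gi⁆ * gi := by group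
    have hcomm : ⁅b, x⁻¹ * gi * x⁆ = ⁅b, gi⁆ := by
      rw [hf]
      exact L4 hA hab hb (commK hA (inv_mem hxK) hgiK) gi
    rw [hcomm]
    exact ih (fun g' hg' => htK g' (List.mem_cons_of_mem gi hg')) (commA hA hb gi)

end StmtAux

theorem stmt_4 {G : Type*} [Group G] (A : Subgroup G) (hA : A.Normal)
    (hab : ∀ u ∈ A, ∀ v ∈ A, u * v = v * u)
    (g : G) (k : ℕ) (hk : 0 < k)
    (hrand : ∀ x ∈ A ⊔ Subgroup.zpowers g, ∃ (g₁ : G) (gs : List G),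
      (g₁ :: gs).length = k ∧
      (∀ gi ∈ g₁ :: gs, Subgroup.zpowers gi = Subgroup.zpowers g) ∧
      (lcomm (x⁻¹ * g₁ * x) gs = 1 ∨
        lcomm g₁ (gs.map (fun gi => x⁻¹ * gi * x)) = 1)) :
    ∀ x ∈ A ⊔ Subgroup.zpowers g, engel x g k = 1 := by
  open StmtAux Subgroup in
  intro x hx
  obtain ⟨g₁, gs, hlen, hgen, hcase⟩ := hrand x hx
  have hg₁zp : zpowers g₁ = zpowers g := hgen g₁ (List.mem_cons_self (a := g₁) (l := gs))
  have hg₁K : g₁ ∈ A ⊔ zpowers g := Subgroup.mem_sup_right (hg₁zp ▸ mem_zpowers g₁)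
  have hyK : x⁻¹ ∈ A ⊔ zpowers g := inv_mem hx
  cases gs with
  | nil =>
    -- k = 1 and g₁ = 1, hence g = 1
    have hk1 : k = 1 := by simpa using hlen.symm
    have hg₁1 : g₁ = 1 := by
      rcases hcase with hc | hc
      · have hc' : x⁻¹ * g₁ * x = 1 := hc
        have hg₁e : g₁ = x * (x⁻¹ * g₁ * x) * x⁻¹ := by group
        rw [hg₁e, hc']; group
      · exact hc
    have hg1 : g = 1 := by
      have : g ∈ zpowers g₁ := hg₁zp ▸ mem_zpowers g
      rw [hg₁1, zpowers_one_eq_bot] at this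
      simpa using this
    subst hk1
    show ⁅engel x g 0, g⁆ = 1
    rw [hg1, commutatorElement_one_right]
  | cons h t =>
    have hhzp : zpowers h = zpowers g := hgen h (by simp)
    have hhK : h ∈ A ⊔ zpowers g := Subgroup.mem_sup_right (hhzp ▸ mem_zpowers h)
    have htzp : ∀ h' ∈ h :: t, zpowers h' = zpowers g := by
      intro h' hh'; exact hgen h' (List.mem_cons_of_mem g₁ hh')
    have hlen' : t.length + 2 = k := by simpa using hlen
    have hcom₁h : Commute g₁ h := by
      have m1 : g₁ ∈ zpowers g := hg₁zp ▸ mem_zpowers g₁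
      have m2 : h ∈ zpowers g := hhzp ▸ mem_zpowers h
      obtain ⟨a, rfl⟩ := m1; obtain ⟨b, rfl⟩ := m2
      exact Commute.zpow_zpow (Commute.refl g) a b
    rcases hcase with hc | hc
    · -- case 1
      have hx1 : x⁻¹ * g₁ * x = ⁅x⁻¹, g₁⁆ * g₁ := by group
      rw [hx1, lcomm_cons, L3 hcom₁h] at hc
      have hcA : ⁅x⁻¹, g₁⁆ ∈ A := commK hA hyK hg₁K
      have hred := reduction hA hab hcA (h :: t) htzp hc
      have : engel ⁅x⁻¹, g₁⁆ g (t.length + 1) = 1 := by simpa using hred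
      have := tailAll hA hab hg₁zp hx (t.length + 1) this
      rwa [hlen'] at this
    · -- case 2
      rw [List.map_cons, lcomm_cons] at hc
      have hfh : x⁻¹ * h * x = ⁅x⁻¹, h⁆ * h := by group
      rw [hfh, L5 hcom₁h] at hc
      set c := ⁅x⁻¹, h⁆ with hcdef
      have hcA : c ∈ A := commK hA hyK hhK
      have hcK : c ∈ A ⊔ zpowers g := Subgroup.mem_sup_left hcA
      have hdA : ⁅g₁, c⁆ ∈ A := commK hA hg₁K hcK
      have htK : ∀ gi ∈ t, gi ∈ A ⊔ zpowers g := by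
        intro gi hgi
        exact Subgroup.mem_sup_right
          ((htzp gi (List.mem_cons_of_mem h hgi)) ▸ mem_zpowers gi)
      rw [map_absorb hA hab hx t htK hdA] at hc
      have hred := reduction hA hab hdA t
        (fun h' hh' => htzp h' (List.mem_cons_of_mem h hh')) hc
      -- engel ⁅g₁, c⁆ g t.length = 1  ⇒  engel ⁅c, g₁⁆ g t.length = 1
      have hinv : ⁅g₁, c⁆ = ⁅c, g₁⁆⁻¹ := (commutatorElement_inv c g₁).symm
      have hcg₁A : ⁅c, g₁⁆ ∈ A := commK hA hcK hg₁K
      rw [hinv, engel_inv hA hab hcg₁A, inv_eq_one] at hred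
      have hcomg : Commute g₁ g := commute_g_of_zpowers hg₁zp
      rw [engel_comm_swap hA hab hcA hcomg] at hred
      have h2 : engel c g (t.length + 1) = 1 := L2 hg₁zp hred
      have := tailAll hA hab hhzp hx (t.length + 1) (by rw [← hcdef]; exact h2)
      rwa [hlen'] at this
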